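/- Let K be the Laplacian kernel on ℝ^d given by K(x, y) = exp(−‖x − y‖₁), with kernel distance dist_φ(x,y) = √(2 − 2 exp(−‖x−y‖₁)). There exist constants C₁, C₂ > 0 such that for every 0 < δ ≤ ε ≤ 2^{-16}, every integers d, N ≥ 1, and every D ≥ max{C₁ ε^{-1} log³(1/δ), C₂ ε^{-2} log(1/δ)}, there exists a random mapping π : ℝ^d → ℝ^D (on some probability space) such that for every x, y ∈ ℕ^d with all coordinates at most N: Pr[ |dist_π(x,y) − dist_φ(x,y)| ≤ ε · dist_φ(x,y) ] ≥ 1 − δ, where dist_π(x,y) = ‖π(x) − π(y)‖₂. -/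

import Mathlib

open MeasureTheory

noncomputable section

/-- The ℓ₁ norm on `ℝ^d`. -/
def l1 {d : ℕ} (x : EuclideanSpace ℝ (Fin d)) : ℝ := ∑ i, |x i|

/-- The kernel distance of the Laplacian kernel `K(x,y) = exp(-‖x-y‖₁)`:
`dist_φ(x,y) = √(2 - 2 exp(-‖x-y‖₁))`. -/
def distLap {d : ℕ} (x y : EuclideanSpace ℝ (Fin d)) : ℝ :=
  Real.sqrt (2 - 2 * Real.exp (-(l1 (x - y))))

namespace LapAux
open Real

/-- Measure on `Bool` with `Pr[false] = p`. -/
def bool2 (p : ℝ) : Measure Bool :=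
  ENNReal.ofReal (1 - p) • Measure.dirac true + ENNReal.ofReal p • Measure.dirac false

lemma bool2_isProb {p : ℝ} (h0 : 0 ≤ p) (h1 : p ≤ 1) : IsProbabilityMeasure (bool2 p) := by
  constructor
  simp [bool2, ← ENNReal.ofReal_add (by linarith : (0:ℝ) ≤ 1 - p) h0]

lemma integral_bool2 {p : ℝ} (h0 : 0 ≤ p) (h1 : p ≤ 1) (f : Bool → ℝ) :
    ∫ b, f b ∂(bool2 p) = (1 - p) * f true + p * f false := by
  have h1' : Integrable f (ENNReal.ofReal (1 - p) • Measure.dirac true) := by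
    haveI : IsFiniteMeasure (ENNReal.ofReal (1 - p) • (Measure.dirac true : Measure Bool)) := by
      constructor
      simp [lt_top_iff_ne_top]
    exact Integrable.of_finite
  have h2' : Integrable f (ENNReal.ofReal p • Measure.dirac false) := by
    haveI : IsFiniteMeasure (ENNReal.ofReal p • (Measure.dirac false : Measure Bool)) := by
      constructor
      simp [lt_top_iff_ne_top]
    exact Integrable.of_finite
  rw [bool2, integral_add_measure h1' h2', integral_smul_measure, integral_smul_measure,
    integral_dirac, integral_dirac, ENNReal.toReal_ofReal (by linarith), ENNReal.toReal_ofReal h0,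
    smul_eq_mul, smul_eq_mul]

/-- Fubini-type wrapper for `Measure.pi` with explicit measures. -/
lemma integral_pi_prod {ι : Type*} [Fintype ι] {E : ι → Type*} [∀ i, MeasurableSpace (E i)]
    (ν : ∀ i, Measure (E i)) [∀ i, IsProbabilityMeasure (ν i)] (f : ∀ i, E i → ℝ) :
    ∫ x, ∏ i, f i (x i) ∂(Measure.pi ν) = ∏ i, ∫ x, f i x ∂(ν i) := by
  letI : ∀ i, MeasureSpace (E i) := fun i => ⟨ν i⟩
  haveI : ∀ i, SigmaFinite (volume : Measure (E i)) := fun i => inferInstanceAs (SigmaFinite (ν i))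
  exact MeasureTheory.integral_fintype_prod_eq_prod f

/-- probability that a given unit gap has no cut -/
def q : ℝ := Real.exp (-1)

lemma q_pos : 0 < q := Real.exp_pos _
lemma q_le_one : q ≤ 1 := Real.exp_le_one_iff.mpr (by norm_num)

instance : IsProbabilityMeasure (bool2 q) := bool2_isProb q_pos.le q_le_one
instance : IsProbabilityMeasure (bool2 (1/2)) := bool2_isProb (by norm_num) (by norm_num)

abbrev Bits (d N : ℕ) := Fin d → Fin N → Bool
abbrev CellIdx (d N : ℕ) := Fin d → Fin (N+1)
abbrev Atom (d N : ℕ) := Bits d N × (CellIdx d N → Bool)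

def νbits (d N : ℕ) : Measure (Bits d N) := Measure.pi fun _ => Measure.pi fun _ => bool2 q
def νsgn (d N : ℕ) : Measure (CellIdx d N → Bool) := Measure.pi fun _ => bool2 (1/2)
def νA (d N : ℕ) : Measure (Atom d N) := (νbits d N).prod (νsgn d N)

instance (d N : ℕ) : IsProbabilityMeasure (νbits d N) := by unfold νbits; infer_instance
instance (d N : ℕ) : IsProbabilityMeasure (νsgn d N) := by unfold νsgn; infer_instance
instance (d N : ℕ) : IsProbabilityMeasure (νA d N) := by unfold νA; infer_instance

def sgn (b : Bool) : ℝ := if b then 1 else -1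

lemma sgn_mul_self (b : Bool) : sgn b * sgn b = 1 := by cases b <;> simp [sgn]
lemma abs_sgn (b : Bool) : |sgn b| = 1 := by cases b <;> simp [sgn]

def cellOf {d N : ℕ} (u : EuclideanSpace ℝ (Fin d)) (b : Bits d N) : CellIdx d N :=
  fun i => ⟨(Finset.univ.filter (fun k : Fin N => ((k : ℕ) : ℝ) < u i ∧ b i k = true)).card,
    Nat.lt_succ_of_le (le_trans (Finset.card_filter_le _ _) (by simp))⟩

def val {d N : ℕ} (u : EuclideanSpace ℝ (Fin d)) (a : Atom d N) : ℝ := sgn (a.2 (cellOf u a.1))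

lemma val_mul_self {d N : ℕ} (u : EuclideanSpace ℝ (Fin d)) (a : Atom d N) :
    val u a * val u a = 1 := sgn_mul_self _

lemma abs_val {d N : ℕ} (u : EuclideanSpace ℝ (Fin d)) (a : Atom d N) : |val u a| = 1 := by
  unfold val sgn; rcases a.2 (cellOf u a.1) <;> simp

def πmap {D d N : ℕ} (ω : Fin D → Atom d N) (u : EuclideanSpace ℝ (Fin d)) :
    EuclideanSpace ℝ (Fin D) := WithLp.toLp 2 (fun j => val u (ω j) / Real.sqrt D)

lemma integral_sgn : ∫ b, sgn b ∂(bool2 (1/2)) = 0 := by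
  rw [integral_bool2 (by norm_num) (by norm_num)]
  norm_num [sgn]

lemma integral_sgn_pair {d N : ℕ} (c₁ c₂ : CellIdx d N) :
    ∫ s, sgn (s c₁) * sgn (s c₂) ∂(νsgn d N) = if c₁ = c₂ then 1 else 0 := by
  by_cases h : c₁ = c₂
  · subst h
    simp only [if_pos rfl, sgn_mul_self]
    simp
  · rw [if_neg h]
    have key : ∀ s : CellIdx d N → Bool, sgn (s c₁) * sgn (s c₂) =
        ∏ j, ((if j = c₁ then sgn (s j) else 1) * (if j = c₂ then sgn (s j) else 1)) := by
      intro s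
      rw [Finset.prod_mul_distrib]
      simp
    simp_rw [key]
    rw [νsgn, integral_pi_prod (fun _ => bool2 (1/2))
      (fun j => fun t => (if j = c₁ then sgn t else 1) * (if j = c₂ then sgn t else 1))]
    refine Finset.prod_eq_zero (Finset.mem_univ c₁) ?_
    simp only [if_pos rfl, if_neg h, mul_one]
    exact integral_sgn

lemma card_filter_eq_iff {N : ℕ} (a c : ℕ) (hac : a ≤ c) (g : Fin N → Bool) :
    (Finset.univ.filter (fun k : Fin N => (k : ℕ) < c ∧ g k = true)).card =
      (Finset.univ.filter (fun k : Fin N => (k : ℕ) < a ∧ g k = true)).card ↔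
    ∀ k : Fin N, a ≤ (k : ℕ) → (k : ℕ) < c → g k = false := by
  have hsub : (Finset.univ.filter (fun k : Fin N => (k : ℕ) < a ∧ g k = true)) ⊆
      (Finset.univ.filter (fun k : Fin N => (k : ℕ) < c ∧ g k = true)) := by
    intro k hk
    simp only [Finset.mem_filter, Finset.mem_univ, true_and] at hk ⊢
    exact ⟨lt_of_lt_of_le hk.1 hac, hk.2⟩
  constructor
  · intro h k hak hkc
    have heq := Finset.eq_of_subset_of_card_le hsub (le_of_eq h)
    by_contra hg
    have hg' : g k = true := by
      cases hgk : g k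
      · exact absurd hgk hg
      · rfl
    have : k ∈ Finset.univ.filter (fun k : Fin N => (k : ℕ) < a ∧ g k = true) := by
      rw [heq]
      simp only [Finset.mem_filter, Finset.mem_univ, true_and]
      exact ⟨hkc, hg'⟩
    simp only [Finset.mem_filter, Finset.mem_univ, true_and] at this
    exact absurd this.1 (not_lt.mpr hak)
  · intro H
    congr 1
    ext k
    simp only [Finset.mem_filter, Finset.mem_univ, true_and]
    constructor
    · rintro ⟨hkc, hg⟩
      refine ⟨?_, hg⟩
      by_contra hka
      rw [H k (not_lt.mp hka) hkc] at hg
      exact Bool.false_ne_true hg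
    · rintro ⟨hka, hg⟩
      exact ⟨lt_of_lt_of_le hka hac, hg⟩

lemma cellOf_nat {d N : ℕ} (x : Fin d → ℕ) (b : Bits d N) (i : Fin d) :
    ((cellOf (WithLp.toLp 2 (fun i => (x i : ℝ))) b i : Fin (N+1)) : ℕ) =
      (Finset.univ.filter (fun k : Fin N => (k : ℕ) < x i ∧ b i k = true)).card := by
  show (Finset.univ.filter (fun k : Fin N => ((k : ℕ) : ℝ) < ((x i : ℕ) : ℝ) ∧ b i k = true)).card = _
  congr 1
  apply Finset.filter_congr
  intro k _
  rw [Nat.cast_lt]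

lemma cell_eq_iff {d N : ℕ} (x y : Fin d → ℕ) (b : Bits d N) (i : Fin d) :
    cellOf (WithLp.toLp 2 (fun i => (x i : ℝ))) b i = cellOf (WithLp.toLp 2 (fun i => (y i : ℝ))) b i ↔
      ∀ k : Fin N, min (x i) (y i) ≤ (k : ℕ) → (k : ℕ) < max (x i) (y i) → b i k = false := by
  rw [Fin.ext_iff, cellOf_nat, cellOf_nat]
  rcases le_total (x i) (y i) with h | h
  · rw [min_eq_left h, max_eq_right h, eq_comm]
    exact card_filter_eq_iff (x i) (y i) h (b i)
  · rw [min_eq_right h, max_eq_left h]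
    exact card_filter_eq_iff (y i) (x i) h (b i)

lemma indicator_prod {d N : ℕ} (x y : Fin d → ℕ) (b : Bits d N) :
    (if cellOf (WithLp.toLp 2 (fun i => (x i : ℝ))) b = cellOf (WithLp.toLp 2 (fun i => (y i : ℝ))) b then (1:ℝ) else 0) =
    ∏ i, ∏ k : Fin N, (if min (x i) (y i) ≤ (k : ℕ) ∧ (k : ℕ) < max (x i) (y i) then
        (if b i k then (0:ℝ) else 1) else 1) := by
  by_cases H : ∀ (i : Fin d) (k : Fin N),
      min (x i) (y i) ≤ (k : ℕ) → (k : ℕ) < max (x i) (y i) → b i k = false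
  · rw [if_pos (funext fun i => (cell_eq_iff x y b i).mpr (H i))]
    rw [eq_comm]
    apply Finset.prod_eq_one
    intro i _
    apply Finset.prod_eq_one
    intro k _
    by_cases hg : min (x i) (y i) ≤ (k : ℕ) ∧ (k : ℕ) < max (x i) (y i)
    · rw [if_pos hg, H i k hg.1 hg.2]
      simp
    · rw [if_neg hg]
  · push_neg at H
    obtain ⟨i, k, h1, h2, h3⟩ := H
    have h3' : b i k = true := by
      cases hgk : b i k
      · exact absurd hgk h3
      · rfl
    rw [if_neg, eq_comm]
    · apply Finset.prod_eq_zero (Finset.mem_univ i)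
      apply Finset.prod_eq_zero (Finset.mem_univ k)
      rw [if_pos ⟨h1, h2⟩, h3']
      simp
    · intro hc
      exact h3 ((cell_eq_iff x y b i).mp (congrFun hc i) k h1 h2)

lemma card_gap {N : ℕ} (m M : ℕ) (hM : M ≤ N) :
    (Finset.univ.filter (fun k : Fin N => m ≤ (k : ℕ) ∧ (k : ℕ) < M)).card = M - m := by
  have : Finset.univ.filter (fun k : Fin N => m ≤ (k : ℕ) ∧ (k : ℕ) < M) =
      (Finset.Ico m M).attachFin (fun r hr => lt_of_lt_of_le (Finset.mem_Ico.mp hr).2 hM) := by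
    ext a
    simp [Finset.mem_attachFin, Finset.mem_Ico]
  rw [this, Finset.card_attachFin, Nat.card_Ico]

lemma abs_cast_sub (a b : ℕ) : |((a : ℝ)) - (b : ℝ)| = ((max a b - min a b : ℕ) : ℝ) := by
  rcases le_total a b with h | h
  · rw [abs_of_nonpos (by simp [Nat.cast_le.mpr h] : (a:ℝ) - b ≤ 0),
      max_eq_right h, min_eq_left h, Nat.cast_sub h]
    ring
  · rw [abs_of_nonneg (by simp [Nat.cast_le.mpr h] : (0:ℝ) ≤ (a:ℝ) - b),
      max_eq_left h, min_eq_right h, Nat.cast_sub h]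

lemma integral_collision {d N : ℕ} (x y : Fin d → ℕ) (hx : ∀ i, x i ≤ N) (hy : ∀ i, y i ≤ N) :
    ∫ b, (if cellOf (WithLp.toLp 2 (fun i => (x i : ℝ))) b = cellOf (WithLp.toLp 2 (fun i => (y i : ℝ))) b then (1:ℝ) else 0)
      ∂(νbits d N) = Real.exp (-(∑ i, |((x i : ℝ)) - (y i : ℝ)|)) := by
  simp_rw [indicator_prod x y]
  rw [νbits, integral_pi_prod (fun _ => Measure.pi fun _ => bool2 q)
    (fun i => fun c => ∏ k : Fin N, (if min (x i) (y i) ≤ (k : ℕ) ∧ (k : ℕ) < max (x i) (y i) then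
        (if c k then (0:ℝ) else 1) else 1))]
  have inner : ∀ i : Fin d, (∫ c, ∏ k : Fin N,
      (if min (x i) (y i) ≤ (k : ℕ) ∧ (k : ℕ) < max (x i) (y i) then
        (if c k then (0:ℝ) else 1) else 1) ∂(Measure.pi fun _ : Fin N => bool2 q)) =
      Real.exp (-(|((x i : ℝ)) - (y i : ℝ)|)) := by
    intro i
    rw [integral_pi_prod (fun _ : Fin N => bool2 q)
      (fun (k : Fin N) (t : Bool) => (if min (x i) (y i) ≤ (k : ℕ) ∧ (k : ℕ) < max (x i) (y i) then
        (if t then (0:ℝ) else 1) else 1))]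
    have each : ∀ k : Fin N, (∫ t, (if min (x i) (y i) ≤ (k : ℕ) ∧ (k : ℕ) < max (x i) (y i) then
        (if t then (0:ℝ) else 1) else 1) ∂(bool2 q)) =
        (if min (x i) (y i) ≤ (k : ℕ) ∧ (k : ℕ) < max (x i) (y i) then q else 1) := by
      intro k
      by_cases hg : min (x i) (y i) ≤ (k : ℕ) ∧ (k : ℕ) < max (x i) (y i)
      · simp only [if_pos hg]
        rw [integral_bool2 q_pos.le q_le_one]
        norm_num
      · simp only [if_neg hg]
        rw [integral_bool2 q_pos.le q_le_one]
        ring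
    simp_rw [each]
    rw [Finset.prod_ite, Finset.prod_const, Finset.prod_const_one, mul_one,
      card_gap _ _ (max_le (hx i) (hy i)), abs_cast_sub]
    rw [show q = Real.exp (-1) from rfl, ← Real.exp_nat_mul]
    congr 1
    push_cast
    ring
  simp_rw [inner]
  rw [← Real.exp_sum]
  congr 1
  rw [← Finset.sum_neg_distrib]
lemma integral_val_mul {d N : ℕ} (x y : Fin d → ℕ) (hx : ∀ i, x i ≤ N) (hy : ∀ i, y i ≤ N) :
    ∫ a, val (WithLp.toLp 2 (fun i => (x i : ℝ))) a * val (WithLp.toLp 2 (fun i => (y i : ℝ))) a ∂(νA d N) =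
      Real.exp (-(∑ i, |((x i : ℝ)) - (y i : ℝ)|)) := by
  rw [νA, integral_prod _ Integrable.of_finite]
  have step : ∀ b : Bits d N,
      (∫ s, val (WithLp.toLp 2 (fun i => (x i : ℝ))) (b, s) * val (WithLp.toLp 2 (fun i => (y i : ℝ))) (b, s) ∂(νsgn d N)) =
      (if cellOf (WithLp.toLp 2 (fun i => (x i : ℝ))) b = cellOf (WithLp.toLp 2 (fun i => (y i : ℝ))) b then (1:ℝ) else 0) := by
    intro b
    simp only [val]
    exact integral_sgn_pair _ _
  simp_rw [step]
  exact integral_collision x y hx hy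

lemma exp_quad {u : ℝ} (hu : |u| ≤ 1) : Real.exp u ≤ 1 + u + (3/4) * u ^ 2 := by
  have h := Real.exp_bound hu (n := 2) (by norm_num)
  norm_num [Finset.sum_range_succ, Nat.factorial] at h
  have h' := (abs_le.mp h).2
  nlinarith [sq_abs u, abs_nonneg u]

section Chernoff
variable {α : Type} [Fintype α] [MeasurableSpace α] [MeasurableSingletonClass α]
  (ν : Measure α) [IsProbabilityMeasure ν]

lemma abs_integral_le_one {g : α → ℝ} (hg : ∀ a, |g a| ≤ 1) : |∫ a, g a ∂ν| ≤ 1 := by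
  refine le_trans (norm_integral_le_integral_norm g) ?_
  calc ∫ a, ‖g a‖ ∂ν ≤ ∫ _a, (1:ℝ) ∂ν :=
        integral_mono Integrable.of_finite Integrable.of_finite (fun a => hg a)
    _ = 1 := by simp

lemma mgf_single_le {g : α → ℝ} (hg : ∀ a, |g a| ≤ 1) {t : ℝ} (ht : 0 ≤ t) (ht2 : t ≤ 1/2) :
    ∫ a, Real.exp (t * (g a - ∫ a', g a' ∂ν)) ∂ν ≤ Real.exp (3 * t ^ 2) := by
  set m := ∫ a', g a' ∂ν with hm
  have hmabs : |m| ≤ 1 := abs_integral_le_one ν hg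
  have hpt : ∀ a, Real.exp (t * (g a - m)) ≤ 1 + t * (g a - m) + (3/4) * (t * (g a - m)) ^ 2 := by
    intro a
    apply exp_quad
    rw [abs_mul, abs_of_nonneg ht]
    have : |g a - m| ≤ 2 := by
      have := hg a
      have := abs_sub_abs_le_abs_sub (g a) m
      have := abs_sub (g a) m
      calc |g a - m| ≤ |g a| + |m| := abs_sub _ _
        _ ≤ 2 := by linarith [hg a]
    nlinarith
  have hint : ∫ a, (1 + t * (g a - m) + (3/4) * (t * (g a - m)) ^ 2) ∂ν ≤ 1 + 3 * t ^ 2 := by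
    have e0 : (fun a => 1 + t * (g a - m) + (3/4) * (t * (g a - m)) ^ 2) =
        (fun a => 1 + (t * (g a - m) + (3/4 * t^2) * (g a - m)^2)) := by
      funext a; ring
    have e1 : ∫ a, (1 + t * (g a - m) + (3/4) * (t * (g a - m)) ^ 2) ∂ν =
        1 + t * (∫ a, (g a - m) ∂ν) + (3/4) * t^2 * ∫ a, (g a - m)^2 ∂ν := by
      rw [e0, integral_add (by exact Integrable.of_finite) (by exact Integrable.of_finite),
        integral_add (by exact Integrable.of_finite) (by exact Integrable.of_finite),
        integral_const_mul, integral_const_mul]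
      simp only [integral_const, measure_univ, probReal_univ, ENNReal.toReal_one, smul_eq_mul, mul_one]
      ring
    have e2 : ∫ a, (g a - m) ∂ν = 0 := by
      rw [integral_sub Integrable.of_finite Integrable.of_finite]
      simp [hm]
    have e3 : ∫ a, (g a - m)^2 ∂ν ≤ 4 := by
      calc ∫ a, (g a - m)^2 ∂ν ≤ ∫ _a, (4:ℝ) ∂ν := by
            apply integral_mono Integrable.of_finite Integrable.of_finite
            intro a
            have h1 : |g a - m| ≤ 2 := by
              calc |g a - m| ≤ |g a| + |m| := abs_sub _ _
                _ ≤ 2 := by linarith [hg a]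
            calc (g a - m)^2 = |g a - m|^2 := (sq_abs _).symm
              _ ≤ 2^2 := pow_le_pow_left₀ (abs_nonneg _) h1 2
              _ = 4 := by norm_num
        _ = 4 := by simp
    rw [e1, e2]
    nlinarith
  calc ∫ a, Real.exp (t * (g a - m)) ∂ν
      ≤ ∫ a, (1 + t * (g a - m) + (3/4) * (t * (g a - m)) ^ 2) ∂ν :=
        integral_mono Integrable.of_finite Integrable.of_finite (fun a => hpt a)
    _ ≤ 1 + 3 * t ^ 2 := hint
    _ ≤ Real.exp (3 * t ^ 2) := by linarith [Real.add_one_le_exp (3 * t ^ 2)]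

lemma chernoff_upper {g : α → ℝ} (hg : ∀ a, |g a| ≤ 1) (D : ℕ) {η : ℝ}
    (hη : 0 < η) (hη1 : η ≤ 1) :
    (Measure.pi fun _ : Fin D => ν) {ω | (D : ℝ) * ((∫ a, g a ∂ν) + η) ≤ ∑ j, g (ω j)}
      ≤ ENNReal.ofReal (Real.exp (-(D : ℝ) * η ^ 2 / 12)) := by
  set μD := (Measure.pi fun _ : Fin D => ν) with hμD
  set m := ∫ a, g a ∂ν with hm
  set t := η / 6 with htdef
  have ht0 : 0 ≤ t := by positivity
  have ht2 : t ≤ 1 / 2 := by rw [htdef]; linarith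
  have hmain := ProbabilityTheory.measure_ge_le_exp_mul_mgf (μ := μD)
    (X := fun ω => ∑ j, g (ω j)) ((D : ℝ) * (m + η)) ht0 Integrable.of_finite
  have hmgf : ProbabilityTheory.mgf (fun ω => ∑ j, g (ω j)) μD t =
      (∫ a, Real.exp (t * g a) ∂ν) ^ D := by
    unfold ProbabilityTheory.mgf
    simp_rw [Finset.mul_sum, Real.exp_sum]
    rw [hμD, integral_pi_prod (fun _ : Fin D => ν) (fun (_ : Fin D) (e : α) => Real.exp (t * g e)),
      Finset.prod_const, Finset.card_univ, Fintype.card_fin]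
  have hsingle : ∫ a, Real.exp (t * g a) ∂ν ≤ Real.exp (t * m + 3 * t ^ 2) := by
    have e0 : ∀ a, Real.exp (t * g a) = Real.exp (t * m) * Real.exp (t * (g a - m)) := by
      intro a
      rw [← Real.exp_add]
      congr 1
      ring
    simp_rw [e0]
    rw [integral_const_mul]
    calc Real.exp (t * m) * ∫ a, Real.exp (t * (g a - m)) ∂ν
        ≤ Real.exp (t * m) * Real.exp (3 * t ^ 2) :=
          mul_le_mul_of_nonneg_left (mgf_single_le ν hg ht0 ht2) (Real.exp_pos _).le
      _ = Real.exp (t * m + 3 * t ^ 2) := (Real.exp_add _ _).symm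
  have hmgf_le : ProbabilityTheory.mgf (fun ω => ∑ j, g (ω j)) μD t ≤
      Real.exp ((D : ℝ) * (t * m + 3 * t ^ 2)) := by
    rw [hmgf]
    calc (∫ a, Real.exp (t * g a) ∂ν) ^ D ≤ (Real.exp (t * m + 3 * t ^ 2)) ^ D :=
          pow_le_pow_left₀ (integral_nonneg fun a => (Real.exp_pos _).le) hsingle D
      _ = Real.exp ((D : ℝ) * (t * m + 3 * t ^ 2)) := by
          rw [← Real.exp_nat_mul]
  have hfinal : Real.exp (-t * ((D : ℝ) * (m + η))) * Real.exp ((D : ℝ) * (t * m + 3 * t ^ 2))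
      = Real.exp (-(D : ℝ) * η ^ 2 / 12) := by
    rw [← Real.exp_add]
    congr 1
    rw [htdef]
    ring
  rw [ENNReal.le_ofReal_iff_toReal_le (measure_ne_top _ _) (Real.exp_pos _).le]
  calc (μD {ω | (D : ℝ) * (m + η) ≤ ∑ j, g (ω j)}).toReal
      ≤ Real.exp (-t * ((D : ℝ) * (m + η))) * ProbabilityTheory.mgf (fun ω => ∑ j, g (ω j)) μD t :=
        hmain
    _ ≤ Real.exp (-t * ((D : ℝ) * (m + η))) * Real.exp ((D : ℝ) * (t * m + 3 * t ^ 2)) :=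
        mul_le_mul_of_nonneg_left hmgf_le (Real.exp_pos _).le
    _ = Real.exp (-(D : ℝ) * η ^ 2 / 12) := hfinal

lemma chernoff_two {g : α → ℝ} (hg : ∀ a, |g a| ≤ 1) (D : ℕ) {η : ℝ}
    (hη : 0 < η) (hη1 : η ≤ 1) :
    (Measure.pi fun _ : Fin D => ν)
        {ω | (D : ℝ) * η ≤ |(∑ j, g (ω j)) - (D : ℝ) * (∫ a, g a ∂ν)|}
      ≤ ENNReal.ofReal (2 * Real.exp (-(D : ℝ) * η ^ 2 / 12)) := by
  set μD := (Measure.pi fun _ : Fin D => ν) with hμD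
  set m := ∫ a, g a ∂ν with hm
  have hg' : ∀ a, |(fun a => -(g a)) a| ≤ 1 := fun a => by
    rw [abs_neg]; exact hg a
  have hm' : ∫ a, -(g a) ∂ν = -m := by rw [integral_neg]
  have hsub : {ω : Fin D → α | (D : ℝ) * η ≤ |(∑ j, g (ω j)) - (D : ℝ) * m|} ⊆
      {ω : Fin D → α | (D : ℝ) * (m + η) ≤ ∑ j, g (ω j)} ∪
      {ω : Fin D → α | (D : ℝ) * ((∫ a, -(g a) ∂ν) + η) ≤ ∑ j, -(g (ω j))} := by
    intro ω hω
    simp only [Set.mem_setOf_eq] at hω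
    rcases le_abs.mp hω with h | h
    · left
      simp only [Set.mem_setOf_eq]
      linarith [h]
    · right
      simp only [Set.mem_setOf_eq, hm', Finset.sum_neg_distrib]
      linarith [h]
  calc μD _ ≤ μD ({ω : Fin D → α | (D : ℝ) * (m + η) ≤ ∑ j, g (ω j)} ∪
        {ω : Fin D → α | (D : ℝ) * ((∫ a, -(g a) ∂ν) + η) ≤ ∑ j, -(g (ω j))}) :=
        measure_mono hsub
    _ ≤ μD {ω : Fin D → α | (D : ℝ) * (m + η) ≤ ∑ j, g (ω j)} +
        μD {ω : Fin D → α | (D : ℝ) * ((∫ a, -(g a) ∂ν) + η) ≤ ∑ j, -(g (ω j))} :=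
        measure_union_le _ _
    _ ≤ ENNReal.ofReal (Real.exp (-(D : ℝ) * η ^ 2 / 12)) +
        ENNReal.ofReal (Real.exp (-(D : ℝ) * η ^ 2 / 12)) :=
        add_le_add (chernoff_upper ν hg D hη hη1) (chernoff_upper ν hg' D hη hη1)
    _ = ENNReal.ofReal (2 * Real.exp (-(D : ℝ) * η ^ 2 / 12)) := by
        rw [← ENNReal.ofReal_add (Real.exp_pos _).le (Real.exp_pos _).le]
        congr 1
        ring

end Chernoff

lemma l1_sub_eq {d : ℕ} (x y : Fin d → ℕ) :
    l1 ((WithLp.toLp 2 (fun i => (x i : ℝ))) - (WithLp.toLp 2 (fun i => (y i : ℝ))) : EuclideanSpace ℝ (Fin d)) =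
      ∑ i, |((x i : ℝ)) - (y i : ℝ)| := by
  rfl

lemma norm_pi_diff {D d N : ℕ} (hD : (D:ℝ) ≠ 0) (ω : Fin D → Atom d N)
    (u v : EuclideanSpace ℝ (Fin d)) :
    ‖πmap ω u - πmap ω v‖ =
      Real.sqrt (2 - 2 * ((∑ j, val u (ω j) * val v (ω j)) / (D : ℝ))) := by
  rw [EuclideanSpace.norm_eq]
  congr 1
  have hco : ∀ j : Fin D, ‖(πmap ω u - πmap ω v) j‖ ^ 2 =
      (2 - 2 * (val u (ω j) * val v (ω j))) / (D : ℝ) := by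
    intro j
    rw [PiLp.sub_apply]
    rw [Real.norm_eq_abs, sq_abs]
    show (val u (ω j) / Real.sqrt D - val v (ω j) / Real.sqrt D) ^ 2 = _
    have hs : Real.sqrt D * Real.sqrt D = (D : ℝ) :=
      Real.mul_self_sqrt (Nat.cast_nonneg D)
    have h1 := val_mul_self u (ω j)
    have h2 := val_mul_self v (ω j)
    field_simp
    nlinarith [h1, h2, hs]
  simp_rw [hco]
  rw [← Finset.sum_div, Finset.sum_sub_distrib, Finset.sum_const, Finset.card_univ,
    Fintype.card_fin, ← Finset.mul_sum]
  field_simp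
  ring

lemma badMeasurable {D d N : ℕ} (s : Set (Fin D → Atom d N)) : MeasurableSet s :=
  MeasurableSet.of_discrete

end LapAux

open LapAux in
/-- oblivious dimension reduction for the Laplacian kernel on integer points.
There are constants `C₁, C₂ > 0` such that for all `0 < δ ≤ ε ≤ 2⁻¹⁶`, all `d, N ≥ 1`, and all
`D ≥ max (C₁ ε⁻¹ log³(1/δ)) (C₂ ε⁻² log(1/δ))`, there is a random mapping
`π : ℝ^d → ℝ^D` preserving the Laplacian kernel distance between any two points of `ℕ^d` with
coordinates at most `N` within relative error `ε`, with probability at least `1 - δ`. -/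
theorem laplacian_oblivious_embedding_integer_points :
    ∃ C₁ > (0:ℝ), ∃ C₂ > (0:ℝ), ∀ (ε δ : ℝ), 0 < δ → δ ≤ ε → ε ≤ 2 ^ (-(16:ℤ)) →
      ∀ (d N : ℕ), 1 ≤ d → 1 ≤ N →
      ∀ (D : ℕ), (D : ℝ) ≥ max (C₁ * ε⁻¹ * (Real.log (1/δ))^3) (C₂ * ε⁻¹^2 * Real.log (1/δ)) →
      ∃ (Ω : Type) (_ : MeasurableSpace Ω) (μ : Measure Ω) (_ : IsProbabilityMeasure μ)
        (π : Ω → EuclideanSpace ℝ (Fin d) → EuclideanSpace ℝ (Fin D)),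
        (∀ x, Measurable (fun a => π a x)) ∧
        ∀ (x y : Fin d → ℕ), (∀ i, x i ≤ N) → (∀ i, y i ≤ N) →
          ENNReal.ofReal (1 - δ) ≤
            μ {a | |‖π a (WithLp.toLp 2 (fun i => (x i : ℝ))) - π a (WithLp.toLp 2 (fun i => (y i : ℝ)))‖
                      - distLap (WithLp.toLp 2 (fun i => (x i : ℝ))) (WithLp.toLp 2 (fun i => (y i : ℝ)))|
                    ≤ ε * distLap (WithLp.toLp 2 (fun i => (x i : ℝ))) (WithLp.toLp 2 (fun i => (y i : ℝ)))} := by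
  refine ⟨1, one_pos, 100, by norm_num, ?_⟩
  intro ε δ hδ hδε hε d N hd hN D hD
  have hε0 : 0 < ε := lt_of_lt_of_le hδ hδε
  have hpow : (2:ℝ) ^ (-(16:ℤ)) = 65536⁻¹ := by norm_num
  have hε1 : ε ≤ 1 := le_trans hε (by rw [hpow]; norm_num)
  have hδ1 : δ ≤ 1 := le_trans hδε hε1
  have hL2 : Real.log 2 ≤ Real.log (1/δ) := by
    apply Real.log_le_log (by norm_num)
    rw [one_div]
    calc (2:ℝ) ≤ ε⁻¹ := by
          rw [← inv_inv (2:ℝ)]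
          apply inv_anti₀ hε0
          calc ε ≤ 65536⁻¹ := hε.trans_eq hpow
            _ ≤ 2⁻¹ := by norm_num
      _ ≤ δ⁻¹ := by
          apply inv_anti₀ hδ hδε
  have hLpos : 0 < Real.log (1/δ) :=
    lt_of_lt_of_le (Real.log_pos (by norm_num)) hL2
  have hD2 : 100 * ε⁻¹^2 * Real.log (1/δ) ≤ (D:ℝ) := le_trans (le_max_right _ _) hD
  have hDpos : 0 < (D:ℝ) := lt_of_lt_of_le (by positivity) hD2
  have hDne : (D:ℝ) ≠ 0 := ne_of_gt hDpos
  haveI hPM : IsProbabilityMeasure (Measure.pi fun _ : Fin D => νA d N) :=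
    MeasureTheory.Measure.pi.instIsProbabilityMeasure (fun _ : Fin D => νA d N)
  refine ⟨Fin D → Atom d N, inferInstance, Measure.pi fun _ => νA d N, hPM,
    fun ω u => πmap ω u, fun u => measurable_of_countable _, ?_⟩
  intro x y hx hy
  set xr : EuclideanSpace ℝ (Fin d) := (WithLp.toLp 2 (fun i => (x i : ℝ))) with hxr
  set yr : EuclideanSpace ℝ (Fin d) := (WithLp.toLp 2 (fun i => (y i : ℝ))) with hyr
  by_cases hxy : x = y
  · subst hxy
    have h0 : distLap xr xr = 0 := by
      simp [distLap, l1, sub_self]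
    have huniv : {a : Fin D → Atom d N |
        |‖πmap a xr - πmap a xr‖ - distLap xr xr| ≤ ε * distLap xr xr} = Set.univ := by
      apply Set.eq_univ_of_forall
      intro a
      simp [h0, sub_self]
    show ENNReal.ofReal (1 - δ) ≤ (Measure.pi fun _ => νA d N) _
    rw [huniv, measure_univ]
    calc ENNReal.ofReal (1 - δ) ≤ ENNReal.ofReal 1 := ENNReal.ofReal_le_ofReal (by linarith)
      _ = 1 := ENNReal.ofReal_one
  · obtain ⟨i₀, hi₀⟩ := Function.ne_iff.mp hxy
    set g : Atom d N → ℝ := fun a => val xr a * val yr a with hgdef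
    have habsg : ∀ a, |g a| ≤ 1 := by
      intro a
      rw [hgdef]
      simp only [abs_mul, abs_val]
      norm_num
    set m : ℝ := Real.exp (-(∑ i, |((x i : ℝ)) - (y i : ℝ)|)) with hm
    have hmean : ∫ a, g a ∂(νA d N) = m := integral_val_mul x y hx hy
    have hdist1 : (1:ℝ) ≤ ∑ i, |((x i : ℝ)) - (y i : ℝ)| := by
      have h1 : (1:ℝ) ≤ |((x i₀ : ℝ)) - (y i₀ : ℝ)| := by
        rw [abs_cast_sub]
        have : 1 ≤ max (x i₀) (y i₀) - min (x i₀) (y i₀) := by omega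
        exact_mod_cast this
      calc (1:ℝ) ≤ |((x i₀ : ℝ)) - (y i₀ : ℝ)| := h1
        _ ≤ ∑ i, |((x i : ℝ)) - (y i : ℝ)| :=
          Finset.single_le_sum (f := fun i => |((x i : ℝ)) - (y i : ℝ)|)
            (fun i _ => abs_nonneg _) (Finset.mem_univ i₀)
    have hm_pos : 0 < m := Real.exp_pos _
    have hm_le : m ≤ Real.exp (-1) := by
      rw [hm]
      apply Real.exp_le_exp.mpr
      linarith
    have hexp_half : Real.exp (-1) ≤ 1/2 := by
      rw [Real.exp_neg]
      have h2 : (2:ℝ) ≤ Real.exp 1 := by linarith [Real.add_one_le_exp 1]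
      calc (Real.exp 1)⁻¹ ≤ 2⁻¹ := inv_anti₀ (by norm_num) h2
        _ = 1/2 := by norm_num
    have hm_half : m ≤ 1/2 := le_trans hm_le hexp_half
    set η : ℝ := ε * (1 - m) with hηdef
    have hη_pos : 0 < η := mul_pos hε0 (by linarith)
    have hη_le1 : η ≤ 1 := mul_le_one₀ hε1 (by linarith) (by linarith)
    have hη_ge : ε/2 ≤ η := by
      calc ε/2 = ε * (1/2) := by ring
        _ ≤ ε * (1 - m) := mul_le_mul_of_nonneg_left (by linarith) hε0.le
    set ℓ := distLap xr yr with hℓdef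
    have hℓ_eq : ℓ = Real.sqrt (2 - 2*m) := by
      rw [hℓdef, distLap, l1_sub_eq x y, ← hm]
    have h2m_pos : 0 < 2 - 2*m := by linarith
    have hℓ_pos : 0 < ℓ := by
      rw [hℓ_eq]
      exact Real.sqrt_pos.mpr h2m_pos
    have hℓ_sq : ℓ * ℓ = 2 - 2*m := by
      rw [hℓ_eq]
      exact Real.mul_self_sqrt (le_of_lt h2m_pos)
    set Bad := {ω : Fin D → Atom d N |
      (D:ℝ) * η ≤ |(∑ j, g (ω j)) - (D:ℝ) * (∫ a, g a ∂(νA d N))|} with hBaddef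
    have hBadBound : (Measure.pi fun _ : Fin D => νA d N) Bad ≤
        ENNReal.ofReal (2 * Real.exp (-(D:ℝ)*η^2/12)) :=
      chernoff_two (νA d N) habsg D hη_pos hη_le1
    have hδexp : δ = Real.exp (-(Real.log (1/δ))) := by
      rw [one_div, Real.log_inv, neg_neg, Real.exp_log hδ]
    have hDη : Real.log (1/δ) + Real.log 2 ≤ (D:ℝ) * η^2 / 12 := by
      have hη2 : ε^2/4 ≤ η^2 := by
        have h := mul_self_le_mul_self (by positivity : (0:ℝ) ≤ ε/2) hη_ge
        calc ε^2/4 = (ε/2) * (ε/2) := by ring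
          _ ≤ η * η := h
          _ = η^2 := (sq η).symm
      have h1 : 25 * Real.log (1/δ) ≤ (D:ℝ) * η^2 := by
        have e1 : (100 * ε⁻¹^2 * Real.log (1/δ)) * (ε^2/4) = 25 * Real.log (1/δ) := by
          field_simp
          ring
        calc 25 * Real.log (1/δ) = (100 * ε⁻¹^2 * Real.log (1/δ)) * (ε^2/4) := e1.symm
          _ ≤ (D:ℝ) * (ε^2/4) := by
              apply mul_le_mul_of_nonneg_right hD2 (by positivity)
          _ ≤ (D:ℝ) * η^2 := by
              apply mul_le_mul_of_nonneg_left (by linarith) hDpos.le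
      linarith [h1, hL2, hLpos]
    have htail : 2 * Real.exp (-(D:ℝ)*η^2/12) ≤ δ := by
      have hmono : Real.exp (-(D:ℝ)*η^2/12) ≤ Real.exp (-(Real.log (1/δ) + Real.log 2)) := by
        apply Real.exp_le_exp.mpr
        linarith
      have heq : 2 * Real.exp (-(Real.log (1/δ) + Real.log 2)) = δ := by
        rw [neg_add, Real.exp_add, ← hδexp, Real.exp_neg, Real.exp_log (by norm_num : (0:ℝ) < 2)]
        ring
      linarith
    have hincl : Badᶜ ⊆ {a : Fin D → Atom d N |
        |‖πmap a xr - πmap a yr‖ - ℓ| ≤ ε * ℓ} := by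
      intro ω hω
      simp only [Set.mem_compl_iff, hBaddef, Set.mem_setOf_eq, not_le, hmean] at hω
      have hTm : |(∑ j, g (ω j)) / (D:ℝ) - m| ≤ η := by
        have e : (∑ j, g (ω j)) / (D:ℝ) - m = ((∑ j, g (ω j)) - (D:ℝ)*m)/(D:ℝ) := by
          field_simp
        rw [e, abs_div, abs_of_pos hDpos, div_le_iff₀ hDpos]
        calc |(∑ j, g (ω j)) - (D:ℝ)*m| ≤ (D:ℝ) * η := le_of_lt hω
          _ = η * (D:ℝ) := by ring
      have hT_le1 : (∑ j, g (ω j)) / (D:ℝ) ≤ 1 := by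
        rw [div_le_one hDpos]
        calc (∑ j, g (ω j)) ≤ ∑ _j : Fin D, (1:ℝ) :=
              Finset.sum_le_sum (fun j _ => le_trans (le_abs_self _) (habsg (ω j)))
          _ = (D:ℝ) := by simp
      set T := (∑ j, g (ω j)) / (D:ℝ) with hT
      have hnorm : ‖πmap ω xr - πmap ω yr‖ = Real.sqrt (2 - 2*T) := by
        rw [norm_pi_diff hDne]
      have hA_nonneg : (0:ℝ) ≤ 2 - 2*T := by linarith
      have key : |Real.sqrt (2-2*T) - ℓ| * ℓ ≤ ε * ℓ * ℓ := by
        have hsq : Real.sqrt (2-2*T) * Real.sqrt (2-2*T) = 2-2*T :=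
          Real.mul_self_sqrt hA_nonneg
        have hprod : (Real.sqrt (2-2*T) - ℓ) * (Real.sqrt (2-2*T) + ℓ) =
            (2-2*T) - (2-2*m) := by linear_combination hsq - hℓ_sq
        have habs2 : |Real.sqrt (2-2*T) - ℓ| * (Real.sqrt (2-2*T) + ℓ) =
            |(2-2*T) - (2-2*m)| := by
          rw [← abs_of_nonneg (show (0:ℝ) ≤ Real.sqrt (2-2*T) + ℓ by
            positivity), ← abs_mul, hprod]
        have hstep : |(2-2*T) - (2-2*m)| ≤ 2*η := by
          have e2 : (2-2*T) - (2-2*m) = 2*(m - T) := by ring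
          rw [e2, abs_mul, abs_two, abs_sub_comm]
          linarith [hTm]
        calc |Real.sqrt (2-2*T) - ℓ| * ℓ ≤ |Real.sqrt (2-2*T) - ℓ| * (Real.sqrt (2-2*T) + ℓ) := by
              apply mul_le_mul_of_nonneg_left _ (abs_nonneg _)
              linarith [Real.sqrt_nonneg (2-2*T)]
          _ = |(2-2*T) - (2-2*m)| := habs2
          _ ≤ 2*η := hstep
          _ = ε*(2-2*m) := by rw [hηdef]; ring
          _ = ε*ℓ*ℓ := by rw [← hℓ_sq]; ring
      have hfin : |Real.sqrt (2-2*T) - ℓ| ≤ ε * ℓ := le_of_mul_le_mul_right key hℓ_pos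
      rw [Set.mem_setOf_eq, hnorm]
      exact hfin
    show ENNReal.ofReal (1 - δ) ≤ (Measure.pi fun _ => νA d N)
      {a : Fin D → Atom d N | |‖πmap a xr - πmap a yr‖ - ℓ| ≤ ε * ℓ}
    calc ENNReal.ofReal (1-δ) = 1 - ENNReal.ofReal δ := by
          rw [ENNReal.ofReal_sub _ hδ.le, ENNReal.ofReal_one]
      _ ≤ 1 - (Measure.pi fun _ => νA d N) Bad := by
          apply tsub_le_tsub_left
          exact le_trans hBadBound (ENNReal.ofReal_le_ofReal htail)
      _ = (Measure.pi fun _ => νA d N) Badᶜ := (prob_compl_eq_one_sub (badMeasurable Bad)).symm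
      _ ≤ _ := measure_mono hincl
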